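/- arXiv:1909.06231 — 2 statements merged into one kernel-verified Lean document; each statement's English description precedes it below -/
import Mathlib

section
/- Let G be a diamond-free circular-arc graph containing a hole C = v_1 ... v_k. Then the vertices of G − C can be partitioned into 2k (possibly empty) pairwise anticomplete sets U_1,...,U_k, S_1,...,S_k such that for each i, G[U_i] is a disjoint union of cliques with N_C(u) = {v_i} for every u ∈ U_i, and G[S_i] is a clique with N_C(s) = {v_i, v_{i+1}} for every s ∈ S_i. -/
/-- Cyclic shift: the element `i + m (mod k)` of `Fin k`. -/
def cycShift {k : ℕ} (i : Fin k) (m : ℕ) : Fin k :=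
  i + ⟨m % k, Nat.mod_lt m (Nat.lt_of_le_of_lt (Nat.zero_le i.1) i.isLt)⟩

/-- `c` lists the vertices of an induced cycle (a hole, when `k ≥ 4`) of `G`, in cyclic
order: `c` is injective and two of its vertices are adjacent iff they are consecutive. -/
def IsInducedCycle {V : Type*} (G : SimpleGraph V) {k : ℕ} (c : Fin k → V) : Prop :=
  Function.Injective c ∧
    ∀ i j : Fin k, G.Adj (c i) (c j) ↔ (i ≠ j ∧ (i = cycShift j 1 ∨ j = cycShift i 1))

/-- The arc of the circle `ℝ/ℤ` starting at `a` and of length `l`. -/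
def circArc (a l : ℝ) : Set (AddCircle (1 : ℝ)) :=
  {x | ∃ u : ℝ, 0 ≤ u ∧ u ≤ l ∧ x = ((a + u : ℝ) : AddCircle (1 : ℝ))}

/-- `G` is a circular-arc graph: it is the intersection graph of a family of arcs
on a circle. -/
def IsCircularArcGraph {V : Type*} (G : SimpleGraph V) : Prop :=
  ∃ (a l : V → ℝ), (∀ v, 0 < l v) ∧
    ∀ v w : V, v ≠ w →
      (G.Adj v w ↔ (circArc (a v) (l v) ∩ circArc (a w) (l w)).Nonempty)

/-- `G` contains no induced diamond (`K₄` minus an edge). -/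
def DiamondFree {V : Type*} (G : SimpleGraph V) : Prop :=
  ∀ a b c d : V, a ≠ b → a ≠ c → a ≠ d → b ≠ c → b ≠ d → c ≠ d →
    G.Adj a b → G.Adj a c → G.Adj a d → G.Adj b c → G.Adj b d → ¬ G.Adj c d → False

namespace DFCAhelper

open Fin.NatCast

abbrev Circ := AddCircle (1 : ℝ)

lemma circ_cont (α : ℝ) : Continuous (fun r : ℝ => ((α + r : ℝ) : Circ)) :=
  continuous_quotient_mk'.comp (continuous_const.add continuous_id)

lemma circ_closed (a l : ℝ) : IsClosed (circArc a l) := by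
  have h : circArc a l = (fun u : ℝ => ((a + u : ℝ) : Circ)) '' Set.Icc 0 l := by
    ext x
    constructor
    · rintro ⟨u, h0, h1, rfl⟩; exact ⟨u, ⟨h0, h1⟩, rfl⟩
    · rintro ⟨u, ⟨h0, h1⟩, rfl⟩; exact ⟨u, h0, h1, rfl⟩
  rw [h]
  exact (isCompact_Icc.image (circ_cont a)).isClosed

lemma coe_eq_of_int (x y : ℝ) (n : ℤ) (h : x - y = n) : (x : Circ) = y := by
  rw [QuotientAddGroup.eq_iff_sub_mem, h]
  exact ⟨n, by simp⟩

lemma int_of_coe_eq {x y : ℝ} (h : (x : Circ) = y) : ∃ n : ℤ, x - y = n := by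
  rw [QuotientAddGroup.eq_iff_sub_mem] at h
  obtain ⟨n, hn⟩ := h
  exact ⟨n, by simpa using hn.symm⟩

lemma cover {k : ℕ} [NeZero k] (hk : 4 ≤ k) (a l : Fin k → ℝ) (hl : ∀ m, 0 < l m)
    (hcons : ∀ m m' : Fin k, m ≠ m' →
      ((circArc (a m) (l m) ∩ circArc (a m') (l m')).Nonempty ↔
        (m = m' + 1 ∨ m' = m + 1)))
    (p : Circ) : ∃ m, p ∈ circArc (a m) (l m) := by
  by_contra hp
  push_neg at hp
  obtain ⟨p₀, rfl⟩ := QuotientAddGroup.mk_surjective p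
  set b : Fin k → ℝ := fun m => p₀ + Int.fract (a m - p₀) with hb
  clear_value b
  have hfract : ∀ m, a m - b m = (⌊a m - p₀⌋ : ℤ) := by
    intro m
    simp only [hb, Int.fract]
    ring
  have hfr0 : ∀ m, Int.fract (a m - p₀) ≠ 0 := by
    intro m h0
    apply hp m
    refine ⟨0, le_refl 0, (hl m).le, ?_⟩
    apply (coe_eq_of_int _ _ (⌊a m - p₀⌋) ?_).symm
    have := hfract m
    have hb0 : b m = p₀ := by simp [hb, h0]
    rw [hb0] at this
    linarith
  have hbgt : ∀ m, p₀ < b m := by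
    intro m
    rw [hb]
    exact lt_add_of_pos_right _ ((Int.fract_nonneg _).lt_of_ne (Ne.symm (hfr0 m)))
  have hblt : ∀ m, b m < p₀ + 1 := fun m => by
    have := Int.fract_lt_one (a m - p₀)
    simp only [hb]
    linarith
  have hlt : ∀ m, b m + l m < p₀ + 1 := by
    intro m
    by_contra h
    push_neg at h
    apply hp m
    refine ⟨p₀ + 1 - b m, by linarith [hblt m], by linarith, ?_⟩
    apply (coe_eq_of_int _ _ (⌊a m - p₀⌋ + 1) ?_).symm
    have := hfract m
    push_cast
    linarith
  have hmem : ∀ (m : Fin k) (r : ℝ), b m ≤ r → r ≤ b m + l m →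
      ((r : ℝ) : Circ) ∈ circArc (a m) (l m) := by
    intro m r h1 h2
    refine ⟨r - b m, by linarith, by linarith, ?_⟩
    apply (coe_eq_of_int _ _ (⌊a m - p₀⌋) ?_).symm
    have := hfract m
    linarith
  have hrep : ∀ (m : Fin k) (x : Circ), x ∈ circArc (a m) (l m) →
      ∃ r : ℝ, b m ≤ r ∧ r ≤ b m + l m ∧ x = (r : Circ) := by
    rintro m x ⟨u, h0, h1, rfl⟩
    refine ⟨b m + u, by linarith, by linarith, ?_⟩
    apply coe_eq_of_int _ _ (⌊a m - p₀⌋)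
    have := hfract m
    linarith
  have hsep : ∀ r r' : ℝ, p₀ < r → r < p₀ + 1 → p₀ < r' → r' < p₀ + 1 →
      (r : Circ) = (r' : Circ) → r = r' := by
    intro r r' h1 h2 h3 h4 h
    obtain ⟨n, hn⟩ := int_of_coe_eq h
    have hn1 : (-1 : ℝ) < (n : ℝ) := by linarith
    have hn2 : ((n : ℝ)) < 1 := by linarith
    have : n = 0 := by exact_mod_cast (by constructor <;> [exact_mod_cast hn1; exact_mod_cast hn2] : (-1 : ℤ) < n ∧ n < 1) |>.elim (fun h1 h2 => by omega)
    rw [this] at hn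
    push_cast at hn
    linarith
  have hcommon : ∀ m m' : Fin k, m ≠ m' → (m = m' + 1 ∨ m' = m + 1) →
      ∃ r : ℝ, (b m ≤ r ∧ r ≤ b m + l m) ∧ (b m' ≤ r ∧ r ≤ b m' + l m') := by
    intro m m' hne hcon
    obtain ⟨x, hx1, hx2⟩ := (hcons m m' hne).mpr hcon
    obtain ⟨r, hr1, hr2, rfl⟩ := hrep m x hx1
    obtain ⟨r', hr1', hr2', he⟩ := hrep m' _ hx2
    have hrr : r = r' :=
      hsep r r' (lt_of_lt_of_le (hbgt m) hr1) (lt_of_le_of_lt hr2 (hlt m))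
        (lt_of_lt_of_le (hbgt m') hr1') (lt_of_le_of_lt hr2' (hlt m')) he
    exact ⟨r, ⟨hr1, hr2⟩, hrr ▸ ⟨hr1', hr2'⟩⟩
  -- Fin index facts
  have hval : ∀ j : ℕ, j < k → ((j : Fin k) : ℕ) = j := by
    intro j h
    rw [Fin.val_natCast]
    exact Nat.mod_eq_of_lt h
  have v1 : ((1 : Fin k) : ℕ) = 1 := by
    rw [Fin.val_one']
    exact Nat.mod_eq_of_lt (by omega)
  have v2 : Fin.val ((1 : Fin k) + 1) = 2 := by
    rw [Fin.val_add, v1]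
    exact Nat.mod_eq_of_lt (by omega)
  set w : Fin k := ((k - 1 : ℕ) : Fin k) with hw
  clear_value w
  have vw : (w : ℕ) = k - 1 := by rw [hw]; exact hval _ (by omega)
  have n01 : (0 : Fin k) ≠ 1 := by
    intro h
    have := congrArg Fin.val h
    rw [v1, Fin.val_zero] at this
    omega
  have hcon01 : ((0 : Fin k) = 1 + 1 ∨ (1 : Fin k) = 0 + 1) := Or.inr (zero_add 1).symm
  have hw0 : (0 : Fin k) ≠ w := by
    intro h
    have := congrArg Fin.val h
    rw [vw, Fin.val_zero] at this
    omega
  have hwadd : w + 1 = 0 := by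
    have h1' : ((1 : ℕ) : Fin k) = 1 := Nat.cast_one
    rw [hw, ← h1', ← Nat.cast_add]
    have : k - 1 + 1 = k := by omega
    rw [this]
    exact Fin.natCast_self k
  have hconw : ((0 : Fin k) = w + 1 ∨ w = 0 + 1) := Or.inl hwadd.symm
  have h1w : (1 : Fin k) ≠ w := by
    intro h
    have := congrArg Fin.val h
    rw [v1, vw] at this
    omega
  have hncon1w : ¬((1 : Fin k) = w + 1 ∨ w = 1 + 1) := by
    rintro (h | h)
    · rw [hwadd] at h
      exact n01 h.symm
    · have := congrArg Fin.val h
      rw [vw, v2] at this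
      omega
  obtain ⟨x, hx0, hx1⟩ := hcommon 0 1 n01 hcon01
  obtain ⟨y, hy0, hyw⟩ := hcommon 0 w hw0 hconw
  have hdisj : ∀ r : ℝ, ¬((b 1 ≤ r ∧ r ≤ b 1 + l 1) ∧ (b w ≤ r ∧ r ≤ b w + l w)) := by
    rintro r ⟨⟨u1, u2⟩, ⟨u3, u4⟩⟩
    exact hncon1w ((hcons 1 w h1w).mp ⟨(r : Circ), hmem 1 r u1 u2, hmem w r u3 u4⟩)
  have hcase : b 1 + l 1 < b w ∨ b w + l w < b 1 := by
    by_contra h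
    push_neg at h
    exact hdisj (max (b 1) (b w))
      ⟨⟨le_max_left _ _, max_le (by linarith [hl 1]) h.1⟩,
       ⟨le_max_right _ _, max_le h.2 (by linarith [hl w])⟩⟩
  -- helper producing a common point of consecutive casted intervals
  have hchain : ∀ j : ℕ, 1 ≤ j → j + 1 ≤ k - 1 →
      ∃ r : ℝ, (b (j : Fin k) ≤ r ∧ r ≤ b (j : Fin k) + l (j : Fin k)) ∧
        (b ((j+1 : ℕ) : Fin k) ≤ r ∧ r ≤ b ((j+1 : ℕ) : Fin k) + l ((j+1 : ℕ) : Fin k)) := by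
    intro j h1 h2
    apply hcommon
    · intro h
      have := congrArg Fin.val h
      rw [hval j (by omega), hval (j+1) (by omega)] at this
      omega
    · right
      have h1' : ((1 : ℕ) : Fin k) = 1 := Nat.cast_one
      rw [← h1', ← Nat.cast_add]
  -- identify indices adjacent to 0
  have hid : ∀ j : ℕ, 1 ≤ j → j ≤ k - 1 →
      ((j : Fin k) = 0 + 1 ∨ (0 : Fin k) = (j : Fin k) + 1) → (j : Fin k) = 1 ∨ j = k - 1 := by
    intro j h1 h2 h
    rcases h with h | h
    · exact Or.inl (by rw [h, zero_add])
    · right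
      have hv : ((j : Fin k) + 1).val = (j + 1) % k := by
        rw [Fin.val_add, hval j (by omega), v1]
      have := congrArg Fin.val h.symm
      rw [hv, Fin.val_zero] at this
      rcases Nat.lt_or_ge (j+1) k with hh | hh
      · rw [Nat.mod_eq_of_lt hh] at this; omega
      · omega
  rcases hcase with hc | hc
  · -- b 1 + l 1 < b w ; z between
    obtain ⟨z, hz1, hz2⟩ : ∃ z : ℝ, b 1 + l 1 < z ∧ z < b w :=
      ⟨(b 1 + l 1 + b w) / 2, by linarith, by linarith⟩
    have hz0 : b 0 ≤ z ∧ z ≤ b 0 + l 0 := by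
      constructor
      · linarith [hx0.1, hx1.2]
      · linarith [hy0.2, hyw.1]
    have havoid : ∀ j : ℕ, 1 ≤ j → j ≤ k - 1 →
        b (j : Fin k) + l (j : Fin k) < z ∨ z < b (j : Fin k) := by
      intro j hj1 hj2
      by_contra h
      push_neg at h
      have hj0 : (j : Fin k) ≠ 0 := by
        intro hh
        have := congrArg Fin.val hh
        rw [hval j (by omega), Fin.val_zero] at this
        omega
      have := hid j hj1 hj2 ((hcons _ 0 hj0).mp
        ⟨(z : Circ), hmem _ z h.2 h.1, hmem 0 z hz0.1 hz0.2⟩)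
      rcases this with h' | h'
      · rw [h'] at h; linarith [h.1, h.2]
      · have : (j : Fin k) = w := by rw [hw, h']
        rw [this] at h; linarith [h.2]
    have hclaim : ∀ j : ℕ, 1 ≤ j → j ≤ k - 1 → b (j : Fin k) + l (j : Fin k) < z := by
      intro j hj1
      induction j, hj1 using Nat.le_induction with
      | base =>
        intro _
        have h1' : ((1:ℕ) : Fin k) = 1 := Nat.cast_one
        rw [h1']
        exact hz1
      | succ j hj ih =>
        intro hjk
        have hLj := ih (by omega)
        rcases havoid (j+1) (by omega) hjk with hL | hR
        · exact hL
        · exfalso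
          obtain ⟨r, hr1, hr2⟩ := hchain j hj hjk
          linarith [hr1.2, hr2.1]
    have := hclaim (k-1) (by omega) (le_refl _)
    rw [← hw] at this
    linarith
  · -- b w + l w < b 1
    obtain ⟨z, hz1, hz2⟩ : ∃ z : ℝ, b w + l w < z ∧ z < b 1 :=
      ⟨(b w + l w + b 1) / 2, by linarith, by linarith⟩
    have hz0 : b 0 ≤ z ∧ z ≤ b 0 + l 0 := by
      constructor
      · linarith [hy0.1, hyw.2]
      · linarith [hx0.2, hx1.1]
    have havoid : ∀ j : ℕ, 1 ≤ j → j ≤ k - 1 →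
        b (j : Fin k) + l (j : Fin k) < z ∨ z < b (j : Fin k) := by
      intro j hj1 hj2
      by_contra h
      push_neg at h
      have hj0 : (j : Fin k) ≠ 0 := by
        intro hh
        have := congrArg Fin.val hh
        rw [hval j (by omega), Fin.val_zero] at this
        omega
      have := hid j hj1 hj2 ((hcons _ 0 hj0).mp
        ⟨(z : Circ), hmem _ z h.2 h.1, hmem 0 z hz0.1 hz0.2⟩)
      rcases this with h' | h'
      · rw [h'] at h; linarith [h.1]
      · have : (j : Fin k) = w := by rw [hw, h']
        rw [this] at h; linarith [h.1, h.2]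
    have hclaim : ∀ j : ℕ, 1 ≤ j → j ≤ k - 1 → z < b (j : Fin k) := by
      intro j hj1
      induction j, hj1 using Nat.le_induction with
      | base =>
        intro _
        have h1' : ((1:ℕ) : Fin k) = 1 := Nat.cast_one
        rw [h1']
        exact hz2
      | succ j hj ih =>
        intro hjk
        have hRj := ih (by omega)
        rcases havoid (j+1) (by omega) hjk with hL | hR
        · exfalso
          obtain ⟨r, hr1, hr2⟩ := hchain j hj hjk
          linarith [hr1.1, hr2.2]
        · exact hR
    have := hclaim (k-1) (by omega) (le_refl _)
    rw [← hw] at this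
    linarith

lemma reach_aux {k : ℕ} [NeZero k] (A : Fin k → Set Circ)
    (hAcl : ∀ m, IsClosed (A m))
    (hcov : ∀ p : Circ, ∃ m, p ∈ A m)
    (α s t : ℝ) (hst : s ≤ t)
    (hcons : ∀ m m' : Fin k, m ≠ m' → (A m ∩ A m').Nonempty → (m = m' + 1 ∨ m' = m + 1))
    (hno3 : ∀ m : Fin k,
      (∃ r ∈ Set.Icc s t, ((α + r : ℝ) : Circ) ∈ A m) →
      (∃ r ∈ Set.Icc s t, ((α + r : ℝ) : Circ) ∈ A (m + 1)) →
      (∃ r ∈ Set.Icc s t, ((α + r : ℝ) : Circ) ∈ A (m + 1 + 1)) → False)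
    (i j : Fin k)
    (hi : ((α + s : ℝ) : Circ) ∈ A i) (hj : ((α + t : ℝ) : Circ) ∈ A j) :
    j = i ∨ j = i + 1 ∨ i = j + 1 := by
  obtain ⟨B, hBdef⟩ : ∃ B : Fin k → Set ℝ,
      B = fun m => Set.Icc s t ∩ (fun r : ℝ => ((α + r : ℝ) : Circ)) ⁻¹' A m := ⟨_, rfl⟩
  have hBcl : ∀ m, IsClosed (B m) := by
    intro m
    rw [hBdef]
    exact isClosed_Icc.inter ((hAcl m).preimage (circ_cont α))
  have hBmem : ∀ (m : Fin k) (r : ℝ), r ∈ B m ↔ (r ∈ Set.Icc s t ∧ ((α + r : ℝ) : Circ) ∈ A m) := by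
    intro m r
    rw [hBdef]
    exact Iff.rfl
  have hsB : s ∈ B i := (hBmem i s).mpr ⟨⟨le_refl s, hst⟩, hi⟩
  have htB : t ∈ B j := (hBmem j t).mpr ⟨⟨hst, le_refl t⟩, hj⟩
  set reach : Fin k → Prop := fun m => Relation.ReflTransGen (fun m m' => (B m ∩ B m').Nonempty) i m
    with hreach
  have hstep : ∀ m m' : Fin k, reach m → (B m ∩ B m').Nonempty → reach m' := by
    intro m m' hm hmm
    exact Relation.ReflTransGen.tail hm hmm
  set R : Set ℝ := ⋃ m ∈ {m : Fin k | reach m}, B m with hR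
  have hRcl : IsClosed R := (Set.toFinite {m : Fin k | reach m}).isClosed_biUnion fun m _ => hBcl m
  have hRmem : ∀ r : ℝ, r ∈ R ↔ ∃ m, reach m ∧ r ∈ B m := by
    intro r
    rw [hR]
    simp only [Set.mem_iUnion, Set.mem_setOf_eq, exists_prop]
  have hiR : reach i := Relation.ReflTransGen.refl
  have hRne : R.Nonempty := ⟨s, (hRmem s).mpr ⟨i, hiR, hsB⟩⟩
  have hRsub : R ⊆ Set.Icc s t := by
    intro r hr
    obtain ⟨m, _, hm⟩ := (hRmem r).mp hr
    exact ((hBmem m r).mp hm).1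
  have hbdd : BddAbove R := ⟨t, fun r hr => (hRsub hr).2⟩
  have hqR : sSup R ∈ R := hRcl.csSup_mem hRne hbdd
  have hq_t : sSup R ≤ t := csSup_le hRne fun r hr => (hRsub hr).2
  have hreach_j : reach j := by
    rcases eq_or_lt_of_le hq_t with heq | hlt
    · obtain ⟨m, hmreach, hmB⟩ := (hRmem _).mp hqR
      exact hstep m j hmreach ⟨sSup R, hmB, heq ▸ htB⟩
    · exfalso
      set R' : Set ℝ := ⋃ m ∈ {m : Fin k | ¬ reach m}, B m with hR'
      have hR'cl : IsClosed R' :=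
        (Set.toFinite {m : Fin k | ¬ reach m}).isClosed_biUnion fun m _ => hBcl m
      have hR'mem : ∀ r : ℝ, r ∈ R' ↔ ∃ m, ¬ reach m ∧ r ∈ B m := by
        intro r
        rw [hR']
        simp only [Set.mem_iUnion, Set.mem_setOf_eq, exists_prop]
      have hsub' : Set.Ioc (sSup R) t ⊆ R' := by
        intro r hr
        obtain ⟨m, hm⟩ := hcov ((α + r : ℝ) : Circ)
        have hsq : s ≤ sSup R := le_csSup hbdd ((hRmem s).mpr ⟨i, hiR, hsB⟩)
        have hrB : r ∈ B m := (hBmem m r).mpr ⟨⟨le_trans hsq hr.1.le, hr.2⟩, hm⟩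
        by_cases hrm : reach m
        · exact absurd (le_csSup hbdd ((hRmem r).mpr ⟨m, hrm, hrB⟩)) (not_le.mpr hr.1)
        · exact (hR'mem r).mpr ⟨m, hrm, hrB⟩
      have hqcl : sSup R ∈ closure (Set.Ioc (sSup R) t) := by
        rw [closure_Ioc hlt.ne]
        exact ⟨le_refl _, hq_t⟩
      have hqR' : sSup R ∈ R' := hR'cl.closure_subset ((closure_mono hsub') hqcl)
      obtain ⟨m₀, hm₀r, hm₀B⟩ := (hRmem _).mp hqR
      obtain ⟨m₁, hm₁r, hm₁B⟩ := (hR'mem _).mp hqR'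
      exact hm₁r (hstep m₀ m₁ hm₀r ⟨sSup R, hm₀B, hm₁B⟩)
  -- invariant along reachability
  have key : ∀ m, reach m → (m = i ∨ m = i + 1 ∨ i = m + 1) := by
    intro m hm
    rw [hreach] at hm
    have hNi : ∃ r ∈ Set.Icc s t, ((α + r : ℝ) : Circ) ∈ A i := ⟨s, ⟨le_refl s, hst⟩, hi⟩
    induction hm with
    | refl => exact Or.inl rfl
    | @tail b c hb hbc ih =>
      obtain ⟨r, hrb, hrc⟩ := hbc
      have hrb' := (hBmem b r).mp hrb
      have hrc' := (hBmem c r).mp hrc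
      have hNb : ∃ r' ∈ Set.Icc s t, ((α + r' : ℝ) : Circ) ∈ A b := ⟨r, hrb'.1, hrb'.2⟩
      have hNc : ∃ r' ∈ Set.Icc s t, ((α + r' : ℝ) : Circ) ∈ A c := ⟨r, hrc'.1, hrc'.2⟩
      rcases eq_or_ne b c with rfl | hne
      · exact ih
      have hcon := hcons b c hne ⟨((α + r : ℝ) : Circ), hrb'.2, hrc'.2⟩
      rcases ih with rfl | rfl | hib
      · rcases hcon with h | h
        · exact Or.inr (Or.inr h)
        · exact Or.inr (Or.inl h)
      · rcases hcon with h | h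
        · exact Or.inl (add_right_cancel h.symm)
        · exact absurd (h ▸ hNc) (fun hcc => hno3 i hNi hNb hcc)
      · rcases hcon with h | h
        · refine (hno3 c hNc (h ▸ hNb) ?_).elim
          have : c + 1 + 1 = i := by rw [← h, ← hib]
          rw [this]
          exact hNi
        · exact Or.inl (by rw [h, ← hib])
  exact key j hreach_j

end DFCAhelper

open DFCAhelper

/-- in a diamond-free circular-arc graph `G` with a hole `C = v_1 … v_k`,
the vertices outside `C` can be partitioned into `2k` pairwise anticomplete sets
`U_1, …, U_k, S_1, …, S_k` where each `G[U_i]` is a disjoint union of cliques whose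
vertices have `N_C(u) = {v_i}`, and each `G[S_i]` is a clique whose vertices have
`N_C(s) = {v_i, v_{i+1}}`. -/
theorem diamondFree_CA_hole_structure {V : Type*} (G : SimpleGraph V)
    (hCA : IsCircularArcGraph G) (hD : DiamondFree G)
    (k : ℕ) (hk : 4 ≤ k) (c : Fin k → V) (hC : IsInducedCycle G c) :
    ∃ U S : Fin k → Set V,
      -- the sets partition `V(G) − C`
      (∀ v : V, (∃ i, v ∈ U i ∨ v ∈ S i) ↔ v ∉ Set.range c) ∧
      (∀ i j, i ≠ j → Disjoint (U i) (U j)) ∧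
      (∀ i j, i ≠ j → Disjoint (S i) (S j)) ∧
      (∀ i j, Disjoint (U i) (S j)) ∧
      -- the sets are pairwise anticomplete
      (∀ i j, i ≠ j → ∀ u ∈ U i, ∀ w ∈ U j, ¬ G.Adj u w) ∧
      (∀ i j, i ≠ j → ∀ u ∈ S i, ∀ w ∈ S j, ¬ G.Adj u w) ∧
      (∀ i j, ∀ u ∈ U i, ∀ w ∈ S j, ¬ G.Adj u w) ∧
      -- `G[U i]` is a disjoint union of cliques (adjacency on `U i` is transitive)
      (∀ i, ∀ u ∈ U i, ∀ v ∈ U i, ∀ w ∈ U i, G.Adj u v → G.Adj v w → u ≠ w → G.Adj u w) ∧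
      (∀ i, ∀ u ∈ U i, ∀ j, G.Adj u (c j) ↔ j = i) ∧
      -- `G[S i]` is a clique
      (∀ i, ∀ x ∈ S i, ∀ y ∈ S i, x ≠ y → G.Adj x y) ∧
      (∀ i, ∀ x ∈ S i, ∀ j, G.Adj x (c j) ↔ (j = i ∨ j = cycShift i 1)) := by
  classical
  haveI : NeZero k := ⟨by omega⟩
  obtain ⟨hinj, hadjC⟩ := hC
  obtain ⟨a, l, hl, harc⟩ := hCA
  -- Fin k arithmetic facts
  have v1 : ((1 : Fin k) : ℕ) = 1 := by
    rw [Fin.val_one']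
    exact Nat.mod_eq_of_lt (by omega)
  have h1 : (1 : Fin k) ≠ 0 := by
    intro h
    have := congrArg Fin.val h
    rw [v1, Fin.val_zero] at this
    omega
  have v2 : Fin.val ((1 : Fin k) + 1) = 2 := by
    rw [Fin.val_add, v1]
    exact Nat.mod_eq_of_lt (by omega)
  have h2 : (1 : Fin k) + 1 ≠ 0 := by
    intro h
    have := congrArg Fin.val h
    rw [v2, Fin.val_zero] at this
    omega
  have v3 : Fin.val ((1 : Fin k) + 1 + 1) = 3 := by
    rw [Fin.val_add, v2, v1]
    exact Nat.mod_eq_of_lt (by omega)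
  have h3 : (1 : Fin k) + 1 + 1 ≠ 0 := by
    intro h
    have := congrArg Fin.val h
    rw [v3, Fin.val_zero] at this
    omega
  have hne1 : ∀ m : Fin k, m ≠ m + 1 := by
    intro m h
    exact h1 (left_eq_add.mp h)
  have hne2 : ∀ m : Fin k, m ≠ m + 1 + 1 := by
    intro m h
    rw [add_assoc] at h
    exact h2 (left_eq_add.mp h)
  have hne3 : ∀ m : Fin k, m ≠ m + 1 + 1 + 1 := by
    intro m h
    rw [add_assoc, add_assoc, ← add_assoc (1 : Fin k)] at h
    exact h3 (left_eq_add.mp h)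
  have hcyc1 : ∀ i : Fin k, cycShift i 1 = i + 1 := by
    intro i
    apply Fin.ext
    rw [cycShift, Fin.val_add, Fin.val_add, v1]
    have : 1 % k = 1 := Nat.mod_eq_of_lt (by omega)
    simp [this]
  have hCadj : ∀ i j : Fin k, G.Adj (c i) (c j) ↔ (i = j + 1 ∨ j = i + 1) := by
    intro i j
    rw [hadjC i j, hcyc1, hcyc1]
    constructor
    · rintro ⟨-, h⟩
      exact h
    · intro h
      refine ⟨?_, h⟩
      rintro rfl
      rcases h with h | h <;> exact hne1 i h
  have hCne : ∀ i j : Fin k, ¬(i = j + 1 ∨ j = i + 1) → ¬ G.Adj (c i) (c j) := by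
    intro i j h
    rw [hCadj]
    exact h
  have hcinj : ∀ i j : Fin k, i ≠ j → c i ≠ c j := fun i j h hc => h (hinj hc)
  have hconsiff : ∀ m m' : Fin k, m ≠ m' →
      ((circArc (a (c m)) (l (c m)) ∩ circArc (a (c m')) (l (c m'))).Nonempty ↔
        (m = m' + 1 ∨ m' = m + 1)) := by
    intro m m' hne'
    rw [← harc (c m) (c m') (hcinj m m' hne'), hCadj]
  have hcov : ∀ p : Circ, ∃ m : Fin k, p ∈ circArc (a (c m)) (l (c m)) :=
    cover hk (fun m => a (c m)) (fun m => l (c m)) (fun m => hl _) hconsiff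
  have hvC : ∀ v, v ∉ Set.range c → ∀ m : Fin k, v ≠ c m := fun v hv m h => hv ⟨m, h.symm⟩
  have hadjv : ∀ v (m : Fin k), v ≠ c m →
      (circArc (a v) (l v) ∩ circArc (a (c m)) (l (c m))).Nonempty → G.Adj v (c m) :=
    fun v m hne' hx => (harc v (c m) hne').mpr hx
  have hself : ∀ v, ((a v : ℝ) : Circ) ∈ circArc (a v) (l v) :=
    fun v => ⟨0, le_refl 0, (hl v).le, by rw [add_zero]⟩
  -- no vertex off C sees three consecutive vertices of C
  have L3 : ∀ v, v ∉ Set.range c → ∀ m : Fin k,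
      G.Adj v (c m) → G.Adj v (c (m + 1)) → G.Adj v (c (m + 1 + 1)) → False := by
    intro v hv m a1 a2 a3
    refine hD v (c (m + 1)) (c m) (c (m + 1 + 1))
      (hvC v hv _) (hvC v hv _) (hvC v hv _)
      (hcinj _ _ (fun h => hne1 m h.symm)) (hcinj _ _ ?_) (hcinj _ _ (hne2 m))
      a2 a1 a3 ?_ ?_ ?_
    · exact hne1 (m + 1)
    · exact (hCadj _ _).mpr (Or.inl rfl)
    · exact (hCadj _ _).mpr (Or.inr rfl)
    · apply hCne
      rintro (h | h)
      · exact hne3 m h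
      · exact hne1 (m + 1) h.symm
  -- any two neighbours on C of a vertex off C are consecutive
  have L4 : ∀ v, v ∉ Set.range c → ∀ i j : Fin k, G.Adj v (c i) → G.Adj v (c j) → i ≠ j →
      (i = j + 1 ∨ j = i + 1) := by
    intro v hv i j ai aj hij
    obtain ⟨xi, hxiv, hxiA⟩ := (harc v (c i) (hvC v hv i)).mp ai
    obtain ⟨xj, hxjv, hxjA⟩ := (harc v (c j) (hvC v hv j)).mp aj
    obtain ⟨si, hsi0, hsil, rfl⟩ := hxiv
    obtain ⟨sj, hsj0, hsjl, rfl⟩ := hxjv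
    have main : ∀ (s t : ℝ) (i' j' : Fin k), 0 ≤ s → s ≤ t → t ≤ l v →
        ((a v + s : ℝ) : Circ) ∈ circArc (a (c i')) (l (c i')) →
        ((a v + t : ℝ) : Circ) ∈ circArc (a (c j')) (l (c j')) →
        j' = i' ∨ j' = i' + 1 ∨ i' = j' + 1 := by
      intro s t i' j' h0 hst hlv hi' hj'
      refine reach_aux (fun m : Fin k => circArc (a (c m)) (l (c m)))
        (fun m => circ_closed _ _) hcov (a v) s t hst
        (fun m m' hmm hne' => (hconsiff m m' hmm).mp hne') ?_ i' j' hi' hj'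
      intro m hm hm1 hm2
      have hadjm : ∀ m'' : Fin k,
          (∃ r ∈ Set.Icc s t, ((a v + r : ℝ) : Circ) ∈ circArc (a (c m'')) (l (c m''))) →
          G.Adj v (c m'') := by
        rintro m'' ⟨r, ⟨hr1, hr2⟩, hrA⟩
        exact hadjv v m'' (hvC v hv m'')
          ⟨_, ⟨r, by linarith, by linarith, rfl⟩, hrA⟩
      exact L3 v hv m (hadjm m hm) (hadjm _ hm1) (hadjm _ hm2)
    rcases le_total si sj with h | h
    · rcases main si sj i j hsi0 h hsjl hxiA hxjA with h' | h' | h'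
      · exact (hij h'.symm).elim
      · exact Or.inr h'
      · exact Or.inl h'
    · rcases main sj si j i hsj0 h hsil hxjA hxiA with h' | h' | h'
      · exact (hij h').elim
      · exact Or.inl h'
      · exact Or.inr h'
  -- every vertex off C has a neighbour on C
  have L2 : ∀ v, v ∉ Set.range c → ∃ m : Fin k, G.Adj v (c m) := by
    intro v hv
    obtain ⟨m, hm⟩ := hcov ((a v : ℝ) : Circ)
    exact ⟨m, hadjv v m (hvC v hv m) ⟨_, hself v, hm⟩⟩
  -- adjacent vertices off C have a common neighbour on C
  have L5 : ∀ u w, u ∉ Set.range c → w ∉ Set.range c → G.Adj u w →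
      ∃ m : Fin k, G.Adj u (c m) ∧ G.Adj w (c m) := by
    intro u w hu hw huw
    obtain ⟨p, hpu, hpw⟩ := (harc u w huw.ne).mp huw
    obtain ⟨m, hm⟩ := hcov p
    exact ⟨m, hadjv u m (hvC u hu m) ⟨p, hpu, hm⟩, hadjv w m (hvC w hw m) ⟨p, hpw, hm⟩⟩
  -- classification of neighbourhoods on C
  have classify : ∀ v, v ∉ Set.range c →
      (∃ i : Fin k, ∀ m, G.Adj v (c m) ↔ m = i) ∨
      (∃ i : Fin k, ∀ m, G.Adj v (c m) ↔ (m = i ∨ m = i + 1)) := by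
    intro v hv
    obtain ⟨i, hi⟩ := L2 v hv
    by_cases hsingle : ∀ m : Fin k, G.Adj v (c m) → m = i
    · left
      exact ⟨i, fun m => ⟨hsingle m, fun h => h ▸ hi⟩⟩
    · right
      push_neg at hsingle
      obtain ⟨j, hj, hji⟩ := hsingle
      obtain ⟨i₀, hA0, hA1⟩ : ∃ i₀ : Fin k, G.Adj v (c i₀) ∧ G.Adj v (c (i₀ + 1)) := by
        rcases L4 v hv j i hj hi hji with h | h
        · exact ⟨i, hi, h ▸ hj⟩
        · exact ⟨j, hj, h ▸ hi⟩
      refine ⟨i₀, fun m => ⟨?_, ?_⟩⟩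
      · intro hm
        by_cases h0 : m = i₀
        · exact Or.inl h0
        by_cases hp1 : m = i₀ + 1
        · exact Or.inr hp1
        exfalso
        rcases L4 v hv m i₀ hm hA0 h0 with h | h
        · exact hp1 h
        · refine L3 v hv m hm (h ▸ hA0) ?_
          have : m + 1 + 1 = i₀ + 1 := by rw [← h]
          rw [this]
          exact hA1
      · rintro (rfl | rfl)
        · exact hA0
        · exact hA1
  refine ⟨fun i => {v | v ∉ Set.range c ∧ ∀ m, G.Adj v (c m) ↔ m = i},
         fun i => {v | v ∉ Set.range c ∧ ∀ m, G.Adj v (c m) ↔ (m = i ∨ m = i + 1)},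
         ?_, ?_, ?_, ?_, ?_, ?_, ?_, ?_, ?_, ?_, ?_⟩
  · -- partition
    intro v
    constructor
    · rintro ⟨i, h | h⟩
      · exact h.1
      · exact h.1
    · intro hv
      rcases classify v hv with ⟨i, h⟩ | ⟨i, h⟩
      · exact ⟨i, Or.inl ⟨hv, h⟩⟩
      · exact ⟨i, Or.inr ⟨hv, h⟩⟩
  · -- U disjoint
    intro i j hij
    rw [Set.disjoint_left]
    rintro v ⟨hv1, hv2⟩ ⟨hw1, hw2⟩
    exact hij ((hw2 i).mp ((hv2 i).mpr rfl))
  · -- S disjoint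
    intro i j hij
    rw [Set.disjoint_left]
    rintro v ⟨hv1, hv2⟩ ⟨hw1, hw2⟩
    have hci := (hw2 i).mp ((hv2 i).mpr (Or.inl rfl))
    have hci1 := (hw2 (i + 1)).mp ((hv2 (i + 1)).mpr (Or.inr rfl))
    rcases hci with h | h
    · exact hij h
    · rcases hci1 with h' | h'
      · exact hne2 i (h.trans (by rw [← h']))
      · exact hij (add_right_cancel h')
  · -- U S disjoint
    intro i j
    rw [Set.disjoint_left]
    rintro v ⟨hv1, hv2⟩ ⟨hw1, hw2⟩
    have hj : j = i := (hv2 j).mp ((hw2 j).mpr (Or.inl rfl))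
    have hj1 : j + 1 = i := (hv2 (j + 1)).mp ((hw2 (j + 1)).mpr (Or.inr rfl))
    exact hne1 j (by rw [hj1, ← hj])
  · -- U U anticomplete
    rintro i j hij u ⟨hu1, hu2⟩ w ⟨hw1, hw2⟩ huw
    obtain ⟨m, hmu, hmw⟩ := L5 u w hu1 hw1 huw
    exact hij (((hu2 m).mp hmu) ▸ ((hw2 m).mp hmw))
  · -- S S anticomplete
    rintro i j hij u ⟨hu1, hu2⟩ w ⟨hw1, hw2⟩ huw
    obtain ⟨m, hmu, hmw⟩ := L5 u w hu1 hw1 huw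
    rcases (hu2 m).mp hmu with hmi | hmi <;> rcases (hw2 m).mp hmw with hmj | hmj
    · exact hij (hmi ▸ hmj ▸ rfl : i = j)
    · -- i = j + 1
      have hij' : i = j + 1 := by rw [← hmi, hmj]
      refine hD w (c (j + 1)) (c j) u
        (hvC w hw1 _) (hvC w hw1 _) huw.ne'
        (hcinj _ _ (fun h => hne1 j h.symm)) (Ne.symm (hvC u hu1 _)) (Ne.symm (hvC u hu1 _))
        ((hw2 (j + 1)).mpr (Or.inr rfl)) ((hw2 j).mpr (Or.inl rfl)) huw.symm
        ((hCadj _ _).mpr (Or.inl rfl)) (((hu2 (j + 1)).mpr (Or.inl hij'.symm)).symm) ?_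
      intro hadj
      rcases (hu2 j).mp hadj.symm with h | h
      · exact hne1 j (h.trans hij')
      · exact hne2 j (h.trans (by rw [hij']))
    · -- j = i + 1
      have hij' : j = i + 1 := by rw [← hmj, hmi]
      refine hD u (c (i + 1)) (c i) w
        (hvC u hu1 _) (hvC u hu1 _) huw.ne
        (hcinj _ _ (fun h => hne1 i h.symm)) (Ne.symm (hvC w hw1 _)) (Ne.symm (hvC w hw1 _))
        ((hu2 (i + 1)).mpr (Or.inr rfl)) ((hu2 i).mpr (Or.inl rfl)) huw
        ((hCadj _ _).mpr (Or.inl rfl)) (((hw2 (i + 1)).mpr (Or.inl hij'.symm)).symm) ?_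
      intro hadj
      rcases (hw2 i).mp hadj.symm with h | h
      · exact hne1 i (h.trans hij')
      · exact hne2 i (h.trans (by rw [hij']))
    · exact hij (add_right_cancel (hmi ▸ hmj : i + 1 = j + 1))
  · -- U S anticomplete
    rintro i j u ⟨hu1, hu2⟩ w ⟨hw1, hw2⟩ huw
    obtain ⟨m, hmu, hmw⟩ := L5 u w hu1 hw1 huw
    have hmi := (hu2 m).mp hmu
    rcases (hw2 m).mp hmw with hmj | hmj
    · -- i = j
      have hij' : i = j := by rw [← hmi, hmj]
      refine hD w (c j) u (c (j + 1))
        (hvC w hw1 _) huw.ne' (hvC w hw1 _)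
        (Ne.symm (hvC u hu1 _)) (hcinj _ _ (hne1 j)) (hvC u hu1 _)
        ((hw2 j).mpr (Or.inl rfl)) huw.symm ((hw2 (j + 1)).mpr (Or.inr rfl))
        (((hu2 j).mpr hij'.symm).symm) ((hCadj _ _).mpr (Or.inr rfl)) ?_
      intro hadj
      exact hne1 j (by rw [(hu2 (j + 1)).mp hadj, hij'])
    · -- i = j + 1
      have hij' : i = j + 1 := by rw [← hmi, hmj]
      refine hD w (c (j + 1)) u (c j)
        (hvC w hw1 _) huw.ne' (hvC w hw1 _)
        (Ne.symm (hvC u hu1 _)) (hcinj _ _ (fun h => hne1 j h.symm)) (hvC u hu1 _)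
        ((hw2 (j + 1)).mpr (Or.inr rfl)) huw.symm ((hw2 j).mpr (Or.inl rfl))
        (((hu2 (j + 1)).mpr hij'.symm).symm) ((hCadj _ _).mpr (Or.inl rfl)) ?_
      intro hadj
      exact hne1 j (by rw [← hij', (hu2 j).mp hadj])
  · -- transitivity on U i
    rintro i u ⟨hu1, hu2⟩ v ⟨hv1, hv2⟩ w ⟨hw1, hw2⟩ huv hvw hneuw
    by_contra hn
    exact hD v (c i) u w
      (hvC v hv1 _) huv.ne' hvw.ne
      (Ne.symm (hvC u hu1 _)) (Ne.symm (hvC w hw1 _)) hneuw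
      ((hv2 i).mpr rfl) huv.symm hvw
      (((hu2 i).mpr rfl).symm) (((hw2 i).mpr rfl).symm) hn
  · -- U neighbourhood characterization
    rintro i u ⟨hu1, hu2⟩ j
    exact hu2 j
  · -- S clique
    rintro i x ⟨hx1, hx2⟩ y ⟨hy1, hy2⟩ hxy
    by_contra hn
    exact hD (c i) (c (i + 1)) x y
      (hcinj _ _ (hne1 i)) (Ne.symm (hvC x hx1 _)) (Ne.symm (hvC y hy1 _))
      (Ne.symm (hvC x hx1 _)) (Ne.symm (hvC y hy1 _)) hxy
      ((hCadj _ _).mpr (Or.inr rfl))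
      (((hx2 i).mpr (Or.inl rfl)).symm) (((hy2 i).mpr (Or.inl rfl)).symm)
      (((hx2 (i + 1)).mpr (Or.inr rfl)).symm) (((hy2 (i + 1)).mpr (Or.inr rfl)).symm) hn
  · -- S neighbourhood characterization
    rintro i x ⟨hx1, hx2⟩ j
    rw [hcyc1]
    exact hx2 j
end

section
/- Let G be a graph that is an odd cycle C = v_1 ... v_k (with attached triangles determining types) containing at least one vertex of Type 4, such that between every pair of consecutive Type-4 vertices along C there is exactly one vertex of Type 0 and all remaining vertices are of Type 1 (no vertices of Type 2 or 3). Then G is not a contact B0-VPG graph. -/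
/-- An axis-parallel nontrivial segment on the grid: `horiz` tells its direction,
`coord` is the fixed coordinate (the `y`-coordinate if horizontal, the `x`-coordinate
if vertical) and `[lo, hi]` (with `lo < hi`, i.e. the segment is nontrivial) is the
interval spanned by the varying coordinate. -/
structure GridSeg where
  horiz : Bool
  coord : ℤ
  lo : ℤ
  hi : ℤ
  lt : lo < hi

namespace GridSeg

/-- The set of points (in the real plane) of a grid segment. -/
def pts (s : GridSeg) : Set (ℝ × ℝ) :=
  if s.horiz then {p | p.2 = (s.coord : ℝ) ∧ (s.lo : ℝ) ≤ p.1 ∧ p.1 ≤ (s.hi : ℝ)}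
  else {p | p.1 = (s.coord : ℝ) ∧ (s.lo : ℝ) ≤ p.2 ∧ p.2 ≤ (s.hi : ℝ)}

/-- The interior of a grid segment. -/
def interior (s : GridSeg) : Set (ℝ × ℝ) :=
  if s.horiz then {p | p.2 = (s.coord : ℝ) ∧ (s.lo : ℝ) < p.1 ∧ p.1 < (s.hi : ℝ)}
  else {p | p.1 = (s.coord : ℝ) ∧ (s.lo : ℝ) < p.2 ∧ p.2 < (s.hi : ℝ)}

/-- The two endpoints of a grid segment. -/
def ends (s : GridSeg) : Set (ℝ × ℝ) :=
  if s.horiz then {((s.lo : ℝ), (s.coord : ℝ)), ((s.hi : ℝ), (s.coord : ℝ))}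
  else {((s.coord : ℝ), (s.lo : ℝ)), ((s.coord : ℝ), (s.hi : ℝ))}

/-- Two segments touch if they share a point which is an endpoint of at least
one of the two segments. -/
def Touch (s t : GridSeg) : Prop :=
  ∃ p : ℝ × ℝ, p ∈ s.pts ∧ p ∈ t.pts ∧ (p ∈ s.ends ∨ p ∈ t.ends)

end GridSeg

/-- `f` is a contact B₀-VPG representation of `G`: the segments of distinct vertices are
interiorly disjoint, and two distinct vertices are adjacent iff their segments touch. -/
def IsB0Rep {V : Type*} (G : SimpleGraph V) (f : V → GridSeg) : Prop :=
  (∀ v w : V, v ≠ w → Disjoint (GridSeg.interior (f v)) (GridSeg.interior (f w))) ∧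
  (∀ v w : V, v ≠ w → (G.Adj v w ↔ GridSeg.Touch (f v) (f w)))

/-- A graph is contact B₀-VPG if it admits a contact B₀-VPG representation. -/
def ContactB0VPG {V : Type*} (G : SimpleGraph V) : Prop :=
  ∃ f : V → GridSeg, IsB0Rep G f

/-- The graph made of a `k`-cycle `v_1 … v_k` together with, for each `i`, `t i` pairwise
anticomplete triangles complete to `v_i` (and anticomplete to the rest of the graph).
Vertices: `Sum.inl i` is the cycle vertex `v_i`; `Sum.inr ⟨i, a, x⟩` is the `x`-th vertex
of the `a`-th triangle attached to `v_i`. -/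
def cycleWithTriangles (k : ℕ) (t : Fin k → ℕ) :
    SimpleGraph (Fin k ⊕ Σ i : Fin k, Fin (t i) × Fin 3) where
  Adj a b :=
    match a, b with
    | Sum.inl i, Sum.inl j => i ≠ j ∧ (i = cycShift j 1 ∨ j = cycShift i 1)
    | Sum.inl i, Sum.inr x => i = x.1
    | Sum.inr x, Sum.inl i => i = x.1
    | Sum.inr x, Sum.inr y => x.1 = y.1 ∧ x.2.1.1 = y.2.1.1 ∧ x.2.2 ≠ y.2.2
  symm := by
    constructor
    rintro (i | x) (j | y) h
    · exact ⟨h.1.symm, h.2.symm⟩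
    · exact h
    · exact h
    · exact ⟨h.1.symm, h.2.1.symm, h.2.2.symm⟩
  loopless := by
    constructor
    rintro (i | x) h
    · exact h.1 rfl
    · exact h.2.2 rfl


section Aux

/-- the fixed coordinate of a point relative to a segment's direction -/
def fixc (s : GridSeg) (p : ℝ × ℝ) : ℝ := if s.horiz then p.2 else p.1
/-- the varying coordinate of a point relative to a segment's direction -/
def varc (s : GridSeg) (p : ℝ × ℝ) : ℝ := if s.horiz then p.1 else p.2
/-- build a point from fixed/varying coordinates -/
def mkp (s : GridSeg) (fx vr : ℝ) : ℝ × ℝ := if s.horiz then (vr, fx) else (fx, vr)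

lemma fixc_mkp (s : GridSeg) (fx vr : ℝ) : fixc s (mkp s fx vr) = fx := by
  unfold fixc mkp; cases s.horiz <;> simp

lemma varc_mkp (s : GridSeg) (fx vr : ℝ) : varc s (mkp s fx vr) = vr := by
  unfold varc mkp; cases s.horiz <;> simp

lemma fixc_of_dir {s t : GridSeg} (h : s.horiz = t.horiz) (p : ℝ × ℝ) :
    fixc s p = fixc t p := by unfold fixc; rw [h]

lemma varc_of_dir {s t : GridSeg} (h : s.horiz = t.horiz) (p : ℝ × ℝ) :
    varc s p = varc t p := by unfold varc; rw [h]

lemma fixc_of_perp {s t : GridSeg} (h : s.horiz ≠ t.horiz) (p : ℝ × ℝ) :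
    fixc s p = varc t p := by
  unfold fixc varc
  cases hs : s.horiz <;> cases ht : t.horiz <;> simp_all

lemma mem_pts_iff {s : GridSeg} {p : ℝ × ℝ} :
    p ∈ s.pts ↔ fixc s p = (s.coord : ℝ) ∧ (s.lo : ℝ) ≤ varc s p ∧ varc s p ≤ (s.hi : ℝ) := by
  unfold GridSeg.pts fixc varc
  cases s.horiz <;> simp

lemma mem_int_iff {s : GridSeg} {p : ℝ × ℝ} :
    p ∈ s.interior ↔ fixc s p = (s.coord : ℝ) ∧ (s.lo : ℝ) < varc s p ∧ varc s p < (s.hi : ℝ) := by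
  unfold GridSeg.interior fixc varc
  cases s.horiz <;> simp

lemma mem_ends_iff {s : GridSeg} {p : ℝ × ℝ} :
    p ∈ s.ends ↔ fixc s p = (s.coord : ℝ) ∧ (varc s p = (s.lo : ℝ) ∨ varc s p = (s.hi : ℝ)) := by
  unfold GridSeg.ends fixc varc
  cases s.horiz <;>
    simp [Set.mem_insert_iff, Set.mem_singleton_iff, Prod.ext_iff] <;> aesop

lemma ends_sub_pts {s : GridSeg} {p : ℝ × ℝ} (h : p ∈ s.ends) : p ∈ s.pts := by
  rw [mem_ends_iff] at h
  rw [mem_pts_iff]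
  have := s.lt
  have : (s.lo : ℝ) ≤ (s.hi : ℝ) := by exact_mod_cast this.le
  rcases h with ⟨h1, h2 | h2⟩ <;> refine ⟨h1, ?_, ?_⟩ <;> rw [h2] <;> linarith

lemma int_sub_pts {s : GridSeg} {p : ℝ × ℝ} (h : p ∈ s.interior) : p ∈ s.pts := by
  rw [mem_int_iff] at h
  rw [mem_pts_iff]
  exact ⟨h.1, h.2.1.le, h.2.2.le⟩

lemma mem_ends_of_not_int {s : GridSeg} {p : ℝ × ℝ} (h : p ∈ s.pts) (h2 : p ∉ s.interior) :
    p ∈ s.ends := by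
  rw [mem_pts_iff] at h
  rw [mem_int_iff] at h2
  rw [mem_ends_iff]
  push_neg at h2
  refine ⟨h.1, ?_⟩
  rcases lt_or_eq_of_le h.2.1 with h3 | h3
  · rcases lt_or_eq_of_le h.2.2 with h4 | h4
    · exact absurd h4 (not_lt.mpr (h2 h.1 h3))
    · exact Or.inr h4
  · exact Or.inl h3.symm

lemma touch_of_mem {s t : GridSeg} (hd : Disjoint s.interior t.interior) {p : ℝ × ℝ}
    (hs : p ∈ s.pts) (ht : p ∈ t.pts) : s.Touch t := by
  by_cases h : p ∈ s.interior
  · have h2 : p ∉ t.interior := fun h2 => (Set.disjoint_left.mp hd h) h2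
    exact ⟨p, hs, ht, Or.inr (mem_ends_of_not_int ht h2)⟩
  · exact ⟨p, hs, ht, Or.inl (mem_ends_of_not_int hs h)⟩

lemma interval_key {a b c d x : ℝ} (hab : a < b) (hcd : c < d)
    (h : ∀ y : ℝ, a < y → y < b → c < y → y < d → False)
    (h1 : a ≤ x) (h2 : x ≤ b) (h3 : c ≤ x) (h4 : x ≤ d) :
    (x = a ∨ x = b) ∧ (x = c ∨ x = d) := by
  have hbc : b ≤ c ∨ d ≤ a := by
    by_contra hcon
    push_neg at hcon
    have h7 : max a c < min b d :=
      max_lt (lt_min hab hcon.2) (lt_min hcon.1 hcd)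
    set y := (max a c + min b d) / 2 with hy
    have hy1 : max a c < y := by rw [hy]; linarith
    have hy2 : y < min b d := by rw [hy]; linarith
    exact h y (lt_of_le_of_lt (le_max_left a c) hy1)
      (lt_of_lt_of_le hy2 (min_le_left b d))
      (lt_of_le_of_lt (le_max_right a c) hy1)
      (lt_of_lt_of_le hy2 (min_le_right b d))
  rcases hbc with h5 | h5
  · exact ⟨Or.inr (le_antisymm h2 (by linarith)), Or.inl (le_antisymm (by linarith) h3)⟩
  · exact ⟨Or.inl (le_antisymm (by linarith) h1), Or.inr (le_antisymm h4 (by linarith))⟩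

/-- same-direction segments with disjoint interiors sharing a point: the point is an
endpoint of both. -/
lemma same_dir_ends {s t : GridSeg} (hdir : s.horiz = t.horiz)
    (hd : Disjoint s.interior t.interior) {p : ℝ × ℝ}
    (hs : p ∈ s.pts) (ht : p ∈ t.pts) : p ∈ s.ends ∧ p ∈ t.ends := by
  rw [mem_pts_iff] at hs ht
  have hvar : varc s p = varc t p := varc_of_dir hdir p
  have hkey : ∀ y : ℝ, (s.lo : ℝ) < y → y < (s.hi : ℝ) → (t.lo : ℝ) < y → y < (t.hi : ℝ) → False := by
    intro y hy1 hy2 hy3 hy4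
    have hcoord : (s.coord : ℝ) = (t.coord : ℝ) := by
      rw [← hs.1, ← ht.1]; exact fixc_of_dir hdir p
    have hq1 : mkp s (s.coord : ℝ) y ∈ s.interior := by
      rw [mem_int_iff, fixc_mkp, varc_mkp]; exact ⟨rfl, hy1, hy2⟩
    have hq2 : mkp s (s.coord : ℝ) y ∈ t.interior := by
      rw [mem_int_iff]
      rw [fixc_of_dir hdir.symm, varc_of_dir hdir.symm, fixc_mkp, varc_mkp]
      exact ⟨hcoord, hy3, hy4⟩
    exact Set.disjoint_left.mp hd hq1 hq2
  have hslt : (s.lo : ℝ) < (s.hi : ℝ) := by exact_mod_cast s.lt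
  have htlt : (t.lo : ℝ) < (t.hi : ℝ) := by exact_mod_cast t.lt
  have := interval_key hslt htlt hkey hs.2.1 hs.2.2 (hvar ▸ ht.2.1) (hvar ▸ ht.2.2)
  constructor
  · rw [mem_ends_iff]; exact ⟨hs.1, this.1⟩
  · rw [mem_ends_iff]
    refine ⟨ht.1, ?_⟩
    rw [← hvar]
    exact this.2

end Aux

section Ept

/-- the endpoint of a segment selected by a Bool -/
def ept (s : GridSeg) (b : Bool) : ℝ × ℝ :=
  mkp s (s.coord : ℝ) (if b then (s.hi : ℝ) else (s.lo : ℝ))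

lemma fixc_ept (s : GridSeg) (b : Bool) : fixc s (ept s b) = (s.coord : ℝ) := fixc_mkp _ _ _

lemma varc_ept (s : GridSeg) (b : Bool) :
    varc s (ept s b) = if b then (s.hi : ℝ) else (s.lo : ℝ) := varc_mkp _ _ _

lemma ept_mem_ends (s : GridSeg) (b : Bool) : ept s b ∈ s.ends := by
  rw [mem_ends_iff, fixc_ept, varc_ept]
  cases b <;> simp

lemma ept_mem_pts (s : GridSeg) (b : Bool) : ept s b ∈ s.pts := ends_sub_pts (ept_mem_ends s b)

lemma eq_of_coords {s : GridSeg} {p q : ℝ × ℝ} (h1 : fixc s p = fixc s q)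
    (h2 : varc s p = varc s q) : p = q := by
  simp only [fixc, varc] at h1 h2
  cases hh : s.horiz <;> rw [hh] at h1 h2 <;> simp at h1 h2 <;> exact Prod.ext_iff.mpr ⟨by tauto, by tauto⟩

lemma mem_ends_iff_ept {s : GridSeg} {p : ℝ × ℝ} :
    p ∈ s.ends ↔ ∃ b : Bool, p = ept s b := by
  constructor
  · intro h
    rw [mem_ends_iff] at h
    have hp : ∀ q : ℝ × ℝ, fixc s p = fixc s q → varc s p = varc s q → p = q :=
      fun q h1 h2 => eq_of_coords h1 h2
    rcases h.2 with h2 | h2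
    · exact ⟨false, hp _ (by rw [fixc_ept, h.1]) (by rw [varc_ept]; simpa using h2)⟩
    · exact ⟨true, hp _ (by rw [fixc_ept, h.1]) (by rw [varc_ept]; simpa using h2)⟩
  · rintro ⟨b, rfl⟩; exact ept_mem_ends s b

lemma ept_inj {s : GridSeg} {b b' : Bool} (h : ept s b = ept s b') : b = b' := by
  have := congrArg (varc s) h
  rw [varc_ept, varc_ept] at this
  have hlt : (s.lo : ℝ) < (s.hi : ℝ) := by exact_mod_cast s.lt
  cases b <;> cases b' <;> simp_all <;> linarith

end Ept

lemma varc_of_perp {s t : GridSeg} (h : s.horiz ≠ t.horiz) (p : ℝ × ℝ) :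
    varc s p = fixc t p := by
  unfold fixc varc
  cases hs : s.horiz <;> cases ht : t.horiz <;> simp_all

lemma triangle_attach {s : GridSeg} (m : Fin 3 → GridSeg)
    (hds : ∀ j, Disjoint s.interior (m j).interior)
    (hdm : ∀ j j', j ≠ j' → Disjoint (m j).interior (m j').interior)
    (hts : ∀ j, s.Touch (m j))
    (htm : ∀ j j', j ≠ j' → (m j).Touch (m j')) :
    ∃ (b : Bool) (j : Fin 3), ept s b ∈ (m j).pts := by
  by_contra hcon
  push_neg at hcon
  -- for each j, get the contact point and its properties
  have key : ∀ j : Fin 3, (m j).horiz ≠ s.horiz ∧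
      ((m j).lo = s.coord ∨ (m j).hi = s.coord) := by
    intro j
    obtain ⟨p, hps, hpm, hor⟩ := hts j
    have hnotend : p ∉ s.ends := by
      intro hend
      obtain ⟨b, rfl⟩ := mem_ends_iff_ept.mp hend
      exact hcon b j hpm
    have hint : p ∈ s.interior := by
      by_contra hc
      exact hnotend (mem_ends_of_not_int hps hc)
    have hperp : (m j).horiz ≠ s.horiz := by
      intro hdir
      exact hnotend (same_dir_ends hdir.symm (hds j) hps hpm).1
    have hmend : p ∈ (m j).ends := by
      apply mem_ends_of_not_int hpm
      intro hc
      exact Set.disjoint_left.mp (hds j) hint hc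
    rw [mem_ends_iff] at hmend
    have hv : varc (m j) p = (s.coord : ℝ) := by
      rw [varc_of_perp hperp p]
      exact (mem_pts_iff.mp hps).1
    refine ⟨hperp, ?_⟩
    rcases hmend.2 with h2 | h2
    · left; exact_mod_cast h2.symm.trans hv
    · right; exact_mod_cast h2.symm.trans hv
  -- all members have the same direction
  have hsamedir : ∀ j j' : Fin 3, (m j).horiz = (m j').horiz := by
    intro j j'
    have h1 := (key j).1
    have h2 := (key j').1
    cases hA : (m j).horiz <;> cases hB : (m j').horiz <;> cases hC : s.horiz <;> simp_all
  -- all members lie on the same line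
  have hsamecoord : ∀ j j' : Fin 3, j ≠ j' → (m j).coord = (m j').coord := by
    intro j j' hne
    obtain ⟨q, hq1, hq2, _⟩ := htm j j' hne
    have e1 := (mem_pts_iff.mp hq1).1
    have e2 := (mem_pts_iff.mp hq2).1
    have := fixc_of_dir (hsamedir j j') q
    exact_mod_cast (e1 ▸ (e2 ▸ this))
  -- pigeonhole on the side touching the line of s
  obtain ⟨j, j', hne, hF⟩ := Fintype.exists_ne_map_eq_of_card_lt
    (fun j : Fin 3 => decide ((m j).lo = s.coord)) (by simp)
  have hco : (m j).coord = (m j').coord := hsamecoord j j' hne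
  have hlt1 : ((m j).lo : ℝ) < ((m j).hi : ℝ) := by exact_mod_cast (m j).lt
  have hlt2 : ((m j').lo : ℝ) < ((m j').hi : ℝ) := by exact_mod_cast (m j').lt
  -- derive the common interior point
  by_cases hcase : (m j).lo = s.coord
  · -- both have lo = s.coord
    have hcase' : (m j').lo = s.coord := by
      exact (decide_eq_decide.mp hF).mp hcase
    have hj : ((m j).lo : ℝ) = (s.coord : ℝ) := by exact_mod_cast hcase
    have hj' : ((m j').lo : ℝ) = (s.coord : ℝ) := by exact_mod_cast hcase'
    set y := ((s.coord : ℝ) + min ((m j).hi : ℝ) ((m j').hi : ℝ)) / 2 with hy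
    have hmin : (s.coord : ℝ) < min ((m j).hi : ℝ) ((m j').hi : ℝ) :=
      lt_min (by linarith) (by linarith)
    have hy1 : (s.coord : ℝ) < y := by rw [hy]; linarith
    have hy2 : y < min ((m j).hi : ℝ) ((m j').hi : ℝ) := by rw [hy]; linarith
    have hq1 : mkp (m j) ((m j).coord : ℝ) y ∈ (m j).interior := by
      rw [mem_int_iff, fixc_mkp, varc_mkp]
      exact ⟨rfl, by linarith, lt_of_lt_of_le hy2 (min_le_left _ _)⟩
    have hq2 : mkp (m j) ((m j).coord : ℝ) y ∈ (m j').interior := by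
      rw [mem_int_iff, fixc_of_dir (hsamedir j' j), varc_of_dir (hsamedir j' j),
        fixc_mkp, varc_mkp]
      exact ⟨by exact_mod_cast hco, by linarith, lt_of_lt_of_le hy2 (min_le_right _ _)⟩
    exact Set.disjoint_left.mp (hdm j j' hne) hq1 hq2
  · -- both have hi = s.coord
    have hcase' : (m j').lo ≠ s.coord := by
      intro h
      exact hcase ((decide_eq_decide.mp hF).mpr h)
    have hj : ((m j).hi : ℝ) = (s.coord : ℝ) := by
      rcases (key j).2 with h | h
      · exact absurd h hcase
      · exact_mod_cast h
    have hj' : ((m j').hi : ℝ) = (s.coord : ℝ) := by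
      rcases (key j').2 with h | h
      · exact absurd h hcase'
      · exact_mod_cast h
    set y := ((max ((m j).lo : ℝ) ((m j').lo : ℝ)) + (s.coord : ℝ)) / 2 with hy
    have hmax : max ((m j).lo : ℝ) ((m j').lo : ℝ) < (s.coord : ℝ) :=
      max_lt (by linarith) (by linarith)
    have hy1 : max ((m j).lo : ℝ) ((m j').lo : ℝ) < y := by rw [hy]; linarith
    have hy2 : y < (s.coord : ℝ) := by rw [hy]; linarith
    have hq1 : mkp (m j) ((m j).coord : ℝ) y ∈ (m j).interior := by
      rw [mem_int_iff, fixc_mkp, varc_mkp]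
      exact ⟨rfl, lt_of_le_of_lt (le_max_left _ _) hy1, by linarith⟩
    have hq2 : mkp (m j) ((m j).coord : ℝ) y ∈ (m j').interior := by
      rw [mem_int_iff, fixc_of_dir (hsamedir j' j), varc_of_dir (hsamedir j' j),
        fixc_mkp, varc_mkp]
      exact ⟨by exact_mod_cast hco, lt_of_le_of_lt (le_max_right _ _) hy1, by linarith⟩
    exact Set.disjoint_left.mp (hdm j j' hne) hq1 hq2

open scoped Fin.NatCast

section CycShift

variable {k : ℕ} [NeZero k]

lemma cycShift_eq (i : Fin k) (m : ℕ) : cycShift i m = i + (m : Fin k) := by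
  apply Fin.ext
  simp [cycShift, Fin.add_def, Fin.val_natCast]

lemma cycShift_cycShift (i : Fin k) (a b : ℕ) :
    cycShift (cycShift i a) b = cycShift i (a + b) := by
  rw [cycShift_eq, cycShift_eq, cycShift_eq, Nat.cast_add, add_assoc]

lemma cycShift_k (i : Fin k) : cycShift i k = i := by
  rw [cycShift_eq, Fin.natCast_self, add_zero]

lemma cycShift_zero (i : Fin k) : cycShift i 0 = i := by
  rw [cycShift_eq, Nat.cast_zero, add_zero]

end CycShift

/-- parity: going around an odd cycle, some consecutive pair has equal direction -/
lemma parity_lemma {k : ℕ} (hk : 5 ≤ k) (hodd : Odd k) (dir : Fin k → Bool) :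
    ∃ i : Fin k, dir (cycShift i 1) = dir i := by
  haveI : NeZero k := ⟨by omega⟩
  by_contra hcon
  push_neg at hcon
  have hflip : ∀ i : Fin k, dir (cycShift i 1) = !(dir i) := by
    intro i
    have h := hcon i
    cases hd : dir (cycShift i 1) <;> cases hd2 : dir i <;> rw [hd, hd2] at h <;> simp_all
  have key : ∀ m : ℕ, dir (cycShift ⟨0, by omega⟩ m) =
      (if Even m then dir ⟨0, by omega⟩ else !(dir ⟨0, by omega⟩)) := by
    intro m
    induction m with
    | zero => rw [cycShift_zero]; simp
    | succ n ih =>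
      rw [← cycShift_cycShift, hflip, ih]
      rcases Nat.even_or_odd n with h | h
      · have h2 : ¬ Even (n+1) := by rw [Nat.even_add_one]; exact fun hc => hc h
        rw [if_pos h, if_neg h2]
      · have hne : ¬ Even n := Nat.not_even_iff_odd.mpr h
        have h2 : Even (n+1) := Nat.even_add_one.mpr hne
        rw [if_neg hne, if_pos h2, Bool.not_not]
  have h1 := key k
  rw [cycShift_k] at h1
  rw [if_neg (Nat.not_even_iff_odd.mpr hodd)] at h1
  cases hd : dir ⟨0, by omega⟩ <;> rw [hd] at h1 <;> simp at h1

/-- counting: under the hbetween hypothesis the type function sums to at least k -/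
lemma sum_lemma {k : ℕ} (hk : 5 ≤ k) (t : Fin k → ℕ) (i1 : Fin k) (h1 : t i1 = 2)
    (hbetween : ∀ (i : Fin k) (d : ℕ), 0 < d → d ≤ k →
      t i = 2 → t (cycShift i d) = 2 →
      (∀ m, 0 < m → m < d → t (cycShift i m) ≠ 2) →
      ∃! m : ℕ, 0 < m ∧ m < d ∧ t (cycShift i m) = 0) :
    k ≤ ∑ i : Fin k, t i := by
  haveI : NeZero k := ⟨by omega⟩
  have key : ∀ n a : ℕ, a ≤ k → k - a ≤ n → t (cycShift i1 a) = 2 →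
      k - a ≤ ∑ m ∈ Finset.Ico a k, t (cycShift i1 m) := by
    intro n
    induction n with
    | zero =>
      intro a ha hn _
      have : a = k := by omega
      subst this
      simp
    | succ n ih =>
      intro a ha hn hta
      rcases eq_or_lt_of_le ha with rfl | halt
      · simp
      · -- find the next type-2 position
        have hex : ∃ d, 0 < d ∧ a + d ≤ k ∧ t (cycShift i1 (a + d)) = 2 := by
          refine ⟨k - a, by omega, by omega, ?_⟩
          have : a + (k - a) = k := by omega
          rw [this, cycShift_k]
          exact h1
        classical
        set P : ℕ → Prop := fun d => 0 < d ∧ a + d ≤ k ∧ t (cycShift i1 (a + d)) = 2 with hP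
        have hexP : ∃ d, P d := hex
        set d := Nat.find hexP with hd
        obtain ⟨hdpos, hdle, hdt⟩ := Nat.find_spec hexP
        have hdmin : ∀ m, m < d → ¬ P m := fun m hm => Nat.find_min hexP hm
        -- apply hbetween
        have hbt := hbetween (cycShift i1 a) d hdpos (by omega) hta
          (by rw [cycShift_cycShift]; exact hdt)
          (by
            intro m hm0 hmd
            rw [cycShift_cycShift]
            intro hcontra
            exact hdmin m hmd ⟨hm0, by omega, hcontra⟩)
        obtain ⟨m0, ⟨hm0pos, hm0lt, hm0t⟩, hm0uniq⟩ := hbt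
        rw [cycShift_cycShift] at hm0t
        have hd2 : 2 ≤ d := by
          rcases Nat.lt_or_ge d 2 with h | h
          · omega
          · exact h
        -- split the sum
        have hsplit : ∑ m ∈ Finset.Ico a k, t (cycShift i1 m) =
            (∑ m ∈ Finset.Ico a (a + d), t (cycShift i1 m)) +
            ∑ m ∈ Finset.Ico (a + d) k, t (cycShift i1 m) := by
          rw [Finset.sum_Ico_consecutive _ (by omega) (by omega)]
        have hIH : k - (a + d) ≤ ∑ m ∈ Finset.Ico (a + d) k, t (cycShift i1 m) :=
          ih (a + d) (by omega) (by omega) hdt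
        -- first block is at least d
        have hfirst : d ≤ ∑ m ∈ Finset.Ico a (a + d), t (cycShift i1 m) := by
          rw [Finset.sum_eq_sum_Ico_succ_bot (by omega : a < a + d)]
          have hsub : (Finset.Ico (a + 1) (a + d)).erase (a + m0) ⊆ Finset.Ico (a + 1) (a + d) :=
            Finset.erase_subset _ _
          have hmem : a + m0 ∈ Finset.Ico (a + 1) (a + d) := by
            rw [Finset.mem_Ico]; omega
          have hcard : ((Finset.Ico (a + 1) (a + d)).erase (a + m0)).card = d - 2 := by
            rw [Finset.card_erase_of_mem hmem, Nat.card_Ico]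
            omega
          have hbound : ∀ m ∈ (Finset.Ico (a + 1) (a + d)).erase (a + m0),
              1 ≤ t (cycShift i1 m) := by
            intro m hm
            obtain ⟨hmne, hmIco⟩ := Finset.mem_erase.mp hm
            rw [Finset.mem_Ico] at hmIco
            by_contra hc
            have ht0 : t (cycShift i1 m) = 0 := by omega
            have := hm0uniq (m - a) ⟨by omega, by omega, by
              rw [cycShift_cycShift]
              have : a + (m - a) = m := by omega
              rw [this]
              exact ht0⟩
            omega
          have hsum1 : ((Finset.Ico (a + 1) (a + d)).erase (a + m0)).card ≤
              ∑ m ∈ (Finset.Ico (a + 1) (a + d)).erase (a + m0), t (cycShift i1 m) :=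
            by
              rw [Finset.card_eq_sum_ones]
              exact Finset.sum_le_sum hbound
          have hsum2 : ∑ m ∈ (Finset.Ico (a + 1) (a + d)).erase (a + m0), t (cycShift i1 m) ≤
              ∑ m ∈ Finset.Ico (a + 1) (a + d), t (cycShift i1 m) :=
            Finset.sum_le_sum_of_subset hsub
          have hta' : t (cycShift i1 a) = 2 := hta
          omega
        omega
  have hfin := key k 0 (by omega) (by omega) (by rw [cycShift_zero]; exact h1)
  have heq : ∑ m ∈ Finset.Ico 0 k, t (cycShift i1 m) = ∑ i : Fin k, t i := by
    rw [← Finset.range_eq_Ico]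
    rw [← Fin.sum_univ_eq_sum_range (fun m => t (cycShift i1 m)) k]
    have : ∀ j : Fin k, cycShift i1 j.val = i1 + j := by
      intro j
      rw [cycShift_eq, Fin.cast_val_eq_self]
    rw [Finset.sum_congr rfl (fun j _ => by rw [this j])]
    exact Fintype.sum_equiv (Equiv.addLeft i1) _ _ (fun j => rfl)
  omega

/-- family `F₄`: let `G` be an odd cycle `v_1 … v_k` where vertex `v_i`
carries `t i ∈ {0, 1, 2}` attached triangles (Type 0, Type 1 and Type 4 respectively),
with at least one Type-4 vertex, and such that between every pair of consecutive Type-4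
vertices along the cycle there is exactly one Type-0 vertex (all remaining vertices
being of Type 1).  Then `G` is not contact B₀-VPG. -/
theorem F4_not_contactB0VPG (k : ℕ) (hk : 5 ≤ k) (hodd : Odd k) (t : Fin k → ℕ)
    (ht : ∀ i, t i = 0 ∨ t i = 1 ∨ t i = 2)
    (h4 : ∃ i, t i = 2)
    (hbetween : ∀ (i : Fin k) (d : ℕ), 0 < d → d ≤ k →
      t i = 2 → t (cycShift i d) = 2 →
      (∀ m, 0 < m → m < d → t (cycShift i m) ≠ 2) →
      ∃! m : ℕ, 0 < m ∧ m < d ∧ t (cycShift i m) = 0) :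
    ¬ ContactB0VPG (cycleWithTriangles k t) := by
  haveI : NeZero k := ⟨by omega⟩
  rintro ⟨f, hdisj, hadj⟩
  obtain ⟨i1, hi1⟩ := h4
  set s : Fin k → GridSeg := fun i => f (Sum.inl i) with hs
  -- Fin k arithmetic helpers
  have hv1 : (1 : Fin k).val = 1 := by rw [Fin.val_one', Nat.mod_eq_of_lt (by omega)]
  have hsucc : ∀ x : Fin k,
      (cycShift x 1).val = x.val + 1 ∨ ((cycShift x 1).val = 0 ∧ x.val + 1 = k) := by
    intro x
    rw [cycShift_eq, Nat.cast_one, Fin.val_add, hv1]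
    rcases Nat.lt_or_ge (x.val + 1) k with h | h
    · left; exact Nat.mod_eq_of_lt h
    · right
      have hxe : x.val + 1 = k := by have := x.isLt; omega
      rw [hxe, Nat.mod_self]
      exact ⟨rfl, rfl⟩
  have hne1 : ∀ x : Fin k, cycShift x 1 ≠ x := by
    intro x h
    have h2 := congrArg Fin.val h
    rcases hsucc x with h3 | h3 <;> omega
  have hshiftcancel : ∀ x y : Fin k, cycShift x 1 = cycShift y 1 → x = y := by
    intro x y h
    rw [cycShift_eq, cycShift_eq] at h
    exact add_right_cancel h
  -- Touch from shared points
  have hTP : ∀ (v w : Fin k ⊕ Σ i : Fin k, Fin (t i) × Fin 3), v ≠ w → ∀ p : ℝ × ℝ,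
      p ∈ (f v).pts → p ∈ (f w).pts → (cycleWithTriangles k t).Adj v w := by
    intro v w hvw p h1 h2
    exact (hadj v w hvw).mpr (touch_of_mem (hdisj v w hvw) h1 h2)
  -- cycle edges and their contact points
  have hAdjE : ∀ i : Fin k, (cycleWithTriangles k t).Adj (Sum.inl i) (Sum.inl (cycShift i 1)) :=
    fun i => ⟨fun h => hne1 i h.symm, Or.inr rfl⟩
  have hedge : ∀ i : Fin k, ∃ p : ℝ × ℝ, p ∈ (s i).pts ∧ p ∈ (s (cycShift i 1)).pts ∧
      (p ∈ (s i).ends ∨ p ∈ (s (cycShift i 1)).ends) := by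
    intro i
    have hne : (Sum.inl i : Fin k ⊕ Σ i : Fin k, Fin (t i) × Fin 3) ≠
        Sum.inl (cycShift i 1) := fun h => hne1 i (Sum.inl.inj h).symm
    exact (hadj _ _ hne).mp (hAdjE i)
  choose pe hpe1 hpe2 hpe3 using hedge
  -- triangle tokens
  have htri : ∀ (i : Fin k) (a : Fin (t i)), ∃ (b : Bool) (x : Fin 3),
      ept (s i) b ∈ (f (Sum.inr ⟨i, a, x⟩)).pts := by
    intro i a
    have hmne : ∀ j j' : Fin 3, j ≠ j' →
        (Sum.inr ⟨i, a, j⟩ : Fin k ⊕ Σ i : Fin k, Fin (t i) × Fin 3) ≠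
        Sum.inr ⟨i, a, j'⟩ := by
      intro j j' hne h
      have h2 := h
      simp at h2
      exact hne h2
    exact triangle_attach (fun x => f (Sum.inr ⟨i, a, x⟩))
      (fun j => hdisj _ _ (by simp))
      (fun j j' hne => hdisj _ _ (hmne j j' hne))
      (fun j => (hadj _ _ (by simp)).mp rfl)
      (fun j j' hne => (hadj _ _ (hmne j j' hne)).mp ⟨rfl, rfl, hne⟩)
  choose btri xtri hbtri using htri
  -- parity: a collinear cycle contact exists
  obtain ⟨i0, hi0⟩ := parity_lemma hk hodd (fun i => (s i).horiz)
  have hi0ne : (Sum.inl i0 : Fin k ⊕ Σ i : Fin k, Fin (t i) × Fin 3) ≠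
      Sum.inl (cycShift i0 1) := fun h => hne1 i0 (Sum.inl.inj h).symm
  have hcol := same_dir_ends hi0.symm (hdisj _ _ hi0ne) (hpe1 i0) (hpe2 i0)
  obtain ⟨b0, hb0⟩ := mem_ends_iff_ept.mp hcol.1
  obtain ⟨b1, hb1⟩ := mem_ends_iff_ept.mp hcol.2
  -- edge tokens
  have hedgetok : ∀ e : Fin k, ∃ (c : Fin k × Bool) (w : Fin k),
      ept (s c.1) c.2 = pe e ∧
      ((c.1 = e ∧ w = cycShift e 1) ∨ (c.1 = cycShift e 1 ∧ w = e)) ∧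
      (e = i0 → c = (i0, b0)) := by
    intro e
    by_cases he : e = i0
    · subst he
      exact ⟨(e, b0), cycShift e 1, hb0.symm, Or.inl ⟨rfl, rfl⟩, fun _ => rfl⟩
    · rcases hpe3 e with h | h
      · obtain ⟨b, hb⟩ := mem_ends_iff_ept.mp h
        exact ⟨(e, b), cycShift e 1, hb.symm, Or.inl ⟨rfl, rfl⟩, fun hcon => absurd hcon he⟩
      · obtain ⟨b, hb⟩ := mem_ends_iff_ept.mp h
        exact ⟨(cycShift e 1, b), e, hb.symm, Or.inr ⟨rfl, rfl⟩, fun hcon => absurd hcon he⟩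
  choose φE witE hE1 hE2 hE3 using hedgetok
  have hwitpts : ∀ e, pe e ∈ (s (witE e)).pts := by
    intro e
    rcases hE2 e with ⟨h1, h2⟩ | ⟨h1, h2⟩
    · rw [h2]; exact hpe2 e
    · rw [h2]; exact hpe1 e
  -- injectivity helper facts
  have hTT : ∀ (i : Fin k) (a a' : Fin (t i)), btri i a = btri i a' → a = a' := by
    intro i a a' hb
    by_contra hne
    have hvne : (Sum.inr ⟨i, a, xtri i a⟩ : Fin k ⊕ Σ i : Fin k, Fin (t i) × Fin 3) ≠
        Sum.inr ⟨i, a', xtri i a'⟩ := by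
      intro h
      have h2 := h
      simp at h2
      exact hne h2.1
    have hAdj : i = i ∧ a.val = a'.val ∧ xtri i a ≠ xtri i a' :=
      hTP _ _ hvne (ept (s i) (btri i a)) (hbtri i a)
        (by rw [hb]; exact hbtri i a')
    exact hne (Fin.ext hAdj.2.1)
  have hET : ∀ (e : Fin k) (i : Fin k) (a : Fin (t i)), φE e ≠ (i, btri i a) := by
    intro e i a heq
    have hfst : (φE e).1 = i := congrArg Prod.fst heq
    have hw : witE e ≠ i := by
      rcases hE2 e with ⟨h1, h2⟩ | ⟨h1, h2⟩
      · intro hwi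
        exact hne1 e (h2.symm.trans (hwi.trans (hfst.symm.trans h1)))
      · intro hwi
        exact hne1 e (((h1.symm.trans hfst).trans hwi.symm).trans h2)
    have hvne : (Sum.inl (witE e) : Fin k ⊕ Σ i : Fin k, Fin (t i) × Fin 3) ≠
        Sum.inr ⟨i, a, xtri i a⟩ := by simp
    have hAdj : witE e = i := hTP _ _ hvne (pe e) (hwitpts e) (by
      rw [← hE1 e, heq]
      exact hbtri i a)
    exact hw hAdj
  have hTU : ∀ (i : Fin k) (a : Fin (t i)), (i, btri i a) ≠ ((cycShift i0 1 : Fin k), b1) := by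
    intro i a heq
    have hfst : i = cycShift i0 1 := congrArg Prod.fst heq
    have hsnd : btri i a = b1 := congrArg Prod.snd heq
    have hvne : (Sum.inl i0 : Fin k ⊕ Σ i : Fin k, Fin (t i) × Fin 3) ≠
        Sum.inr ⟨i, a, xtri i a⟩ := by simp
    have hAdj : i0 = i := hTP _ _ hvne (pe i0) (hpe1 i0) (by
      rw [hb1, ← hfst, ← hsnd]
      exact hbtri i a)
    exact hne1 i0 (by rw [← hfst]; exact hAdj.symm)
  have hEU : ∀ e : Fin k, φE e ≠ ((cycShift i0 1 : Fin k), b1) := by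
    intro e heq
    by_cases he : e = i0
    · rw [hE3 e he] at heq
      have hfst : i0 = cycShift i0 1 := congrArg Prod.fst heq
      exact hne1 i0 hfst.symm
    · have hfst : (φE e).1 = cycShift i0 1 := congrArg Prod.fst heq
      rcases hE2 e with ⟨h1, h2⟩ | ⟨h1, h2⟩
      · -- e = cycShift i0 1 ; witE e = cycShift e 1
        have he1 : e = cycShift i0 1 := h1.symm.trans hfst
        have hpeq : pe e = pe i0 := by rw [← hE1 e, heq, ← hb1]
        have hwne : witE e ≠ i0 := by
          intro h
          have hv2 := congrArg Fin.val h2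
          have hv3 := congrArg Fin.val he1
          have hv4 := congrArg Fin.val h
          rcases hsucc e with h5 | h5 <;> rcases hsucc i0 with h6 | h6 <;>
            (have := e.isLt; have := i0.isLt; have := (witE e).isLt; omega)
        have hvne : (Sum.inl (witE e) : Fin k ⊕ Σ i : Fin k, Fin (t i) × Fin 3) ≠
            Sum.inl i0 := fun h => hwne (Sum.inl.inj h)
        have hAdj : witE e ≠ i0 ∧ (witE e = cycShift i0 1 ∨ i0 = cycShift (witE e) 1) :=
          hTP _ _ hvne (pe e) (hwitpts e) (by rw [hpeq]; exact hpe1 i0)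
        have hv2 := congrArg Fin.val h2
        have hv3 := congrArg Fin.val he1
        rcases hAdj.2 with hc | hc <;> have hvc := congrArg Fin.val hc <;>
          rcases hsucc e with h5 | h5 <;> rcases hsucc i0 with h6 | h6 <;>
          rcases hsucc (witE e) with h7 | h7 <;>
          (have := e.isLt; have := i0.isLt; have := (witE e).isLt; omega)
      · exact he (hshiftcancel e i0 (h1.symm.trans hfst))
  have hEE : ∀ e e' : Fin k, φE e = φE e' → e = e' := by
    intro e e' heq
    by_contra hne
    have hfst := congrArg Prod.fst heq
    have hpeq : pe e = pe e' := by rw [← hE1 e, heq, hE1 e']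
    rcases hE2 e with ⟨h1, h2⟩ | ⟨h1, h2⟩ <;> rcases hE2 e' with ⟨h1', h2'⟩ | ⟨h1', h2'⟩
    · exact hne ((h1.symm.trans hfst).trans h1')
    · -- e = cycShift e' 1, witE e = cycShift e 1, witE e' = e'
      have he1 : e = cycShift e' 1 := (h1.symm.trans hfst).trans h1'
      have hv1e := congrArg Fin.val he1
      have hv2 := congrArg Fin.val h2
      have hv2' := congrArg Fin.val h2'
      have hwne : witE e ≠ witE e' := by
        intro h
        have hv := congrArg Fin.val h
        rcases hsucc e with h5 | h5 <;> rcases hsucc e' with h6 | h6 <;>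
          (have := e.isLt; have := e'.isLt; omega)
      have hvne : (Sum.inl (witE e) : Fin k ⊕ Σ i : Fin k, Fin (t i) × Fin 3) ≠
          Sum.inl (witE e') := fun h => hwne (Sum.inl.inj h)
      have hAdj : witE e ≠ witE e' ∧
          (witE e = cycShift (witE e') 1 ∨ witE e' = cycShift (witE e) 1) :=
        hTP _ _ hvne (pe e) (hwitpts e) (by rw [hpeq]; exact hwitpts e')
      rcases hAdj.2 with hc | hc <;> have hvc := congrArg Fin.val hc <;>
        rcases hsucc e with h5 | h5 <;> rcases hsucc e' with h6 | h6 <;>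
        rcases hsucc (witE e) with h7 | h7 <;> rcases hsucc (witE e') with h8 | h8 <;>
        (have := e.isLt; have := e'.isLt; have := (witE e).isLt; have := (witE e').isLt; omega)
    · -- e' = cycShift e 1, witE e = e, witE e' = cycShift e' 1
      have he1 : e' = cycShift e 1 := (h1'.symm.trans hfst.symm).trans h1
      have hv1e := congrArg Fin.val he1
      have hv2 := congrArg Fin.val h2
      have hv2' := congrArg Fin.val h2'
      have hwne : witE e ≠ witE e' := by
        intro h
        have hv := congrArg Fin.val h
        rcases hsucc e with h5 | h5 <;> rcases hsucc e' with h6 | h6 <;>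
          (have := e.isLt; have := e'.isLt; omega)
      have hvne : (Sum.inl (witE e) : Fin k ⊕ Σ i : Fin k, Fin (t i) × Fin 3) ≠
          Sum.inl (witE e') := fun h => hwne (Sum.inl.inj h)
      have hAdj : witE e ≠ witE e' ∧
          (witE e = cycShift (witE e') 1 ∨ witE e' = cycShift (witE e) 1) :=
        hTP _ _ hvne (pe e) (hwitpts e) (by rw [hpeq]; exact hwitpts e')
      rcases hAdj.2 with hc | hc <;> have hvc := congrArg Fin.val hc <;>
        rcases hsucc e with h5 | h5 <;> rcases hsucc e' with h6 | h6 <;>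
        rcases hsucc (witE e) with h7 | h7 <;> rcases hsucc (witE e') with h8 | h8 <;>
        (have := e.isLt; have := e'.isLt; have := (witE e).isLt; have := (witE e').isLt; omega)
    · exact hne (hshiftcancel e e' ((h1.symm.trans hfst).trans h1'))
  -- the counting argument
  have hcard := Fintype.card_le_of_injective
    (fun d : (Σ i : Fin k, Fin (t i)) ⊕ (Fin k ⊕ Unit) =>
      match d with
      | Sum.inl ⟨i, a⟩ => ((i : Fin k), btri i a)
      | Sum.inr (Sum.inl e) => φE e
      | Sum.inr (Sum.inr _) => ((cycShift i0 1 : Fin k), b1)) ?_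
  · have hcD : Fintype.card ((Σ i : Fin k, Fin (t i)) ⊕ (Fin k ⊕ Unit)) =
        (∑ i : Fin k, t i) + (k + 1) := by
      simp
    have hcT : Fintype.card (Fin k × Bool) = k * 2 := by simp
    have hsum := sum_lemma hk t i1 hi1 hbetween
    rw [hcD, hcT] at hcard
    omega
  · rintro (⟨i, a⟩ | e | ⟨⟩) (⟨i', a'⟩ | e' | ⟨⟩) heq
    · replace heq : ((i : Fin k), btri i a) = ((i' : Fin k), btri i' a') := heq
      have hii : i = i' := congrArg Prod.fst heq
      subst hii
      have haa : a = a' := hTT i a a' (congrArg Prod.snd heq)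
      subst haa
      rfl
    · replace heq : ((i : Fin k), btri i a) = φE e' := heq
      exact absurd heq.symm (hET e' i a)
    · replace heq : ((i : Fin k), btri i a) = ((cycShift i0 1 : Fin k), b1) := heq
      exact absurd heq (hTU i a)
    · replace heq : φE e = ((i' : Fin k), btri i' a') := heq
      exact absurd heq (hET e i' a')
    · replace heq : φE e = φE e' := heq
      rw [hEE e e' heq]
    · replace heq : φE e = ((cycShift i0 1 : Fin k), b1) := heq
      exact absurd heq (hEU e)
    · replace heq : ((i' : Fin k), btri i' a') = ((cycShift i0 1 : Fin k), b1) := heq.symm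
      exact absurd heq (hTU i' a')
    · replace heq : φE e' = ((cycShift i0 1 : Fin k), b1) := heq.symm
      exact absurd heq (hEU e')
    · rfl
end
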